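/- Let g : ℝ → ℝ be a convex, three times differentiable function and let M > 0 be such that |g'''(t)| ≤ M·g''(t) for all t ∈ ℝ. Then for all t ≥ 0, (g''(0)/M²)·(exp(−M·t) + M·t − 1) ≤ g(t) − g(0) − g'(0)·t ≤ (g''(0)/M²)·(exp(M·t) + M·t − 1). -/

import Mathlib

/-- If `f` has derivative `f'` everywhere and `f' ≥ 0` on `[0,∞)`, then `f 0 ≤ f t`
for `t ≥ 0`. -/
lemma mono_from_deriv_aux (f f' : ℝ → ℝ) (hd : ∀ t : ℝ, HasDerivAt f (f' t) t)
    (h : ∀ t : ℝ, 0 ≤ t → 0 ≤ f' t) : ∀ t : ℝ, 0 ≤ t → f 0 ≤ f t := by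
  intro t ht
  have hmono : MonotoneOn f (Set.Ici (0:ℝ)) := by
    apply monotoneOn_of_deriv_nonneg (convex_Ici 0)
    · exact fun x _ => (hd x).continuousAt.continuousWithinAt
    · exact fun x _ => (hd x).differentiableAt.differentiableWithinAt
    · intro x hx
      rw [(hd x).deriv]
      exact h x (le_of_lt (by simpa using hx))
  exact hmono (by simp) ht ht

/-- Self-concordance bound (Lemma B.1, due to Bach): if `g` is convex, three times
differentiable, and `|g''' t| ≤ M * g'' t` for all `t`, then for all `t ≥ 0`,
`(g'' 0 / M²) * (exp (−M t) + M t − 1) ≤ g t − g 0 − g' 0 * t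
  ≤ (g'' 0 / M²) * (exp (M t) + M t − 1)`. -/
theorem self_concordance_bound
    (g g' g'' g''' : ℝ → ℝ) (M : ℝ) (hM : 0 < M)
    (hconv : ConvexOn ℝ Set.univ g)
    (hd1 : ∀ t : ℝ, HasDerivAt g (g' t) t)
    (hd2 : ∀ t : ℝ, HasDerivAt g' (g'' t) t)
    (hd3 : ∀ t : ℝ, HasDerivAt g'' (g''' t) t)
    (hbound : ∀ t : ℝ, |g''' t| ≤ M * g'' t) :
    ∀ t : ℝ, 0 ≤ t →
      (g'' 0 / M ^ 2) * (Real.exp (-(M * t)) + M * t - 1)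
          ≤ g t - g 0 - g' 0 * t ∧
        g t - g 0 - g' 0 * t
          ≤ (g'' 0 / M ^ 2) * (Real.exp (M * t) + M * t - 1) := by
  have hg2 : ∀ s : ℝ, 0 ≤ g'' s := by
    intro s
    nlinarith [abs_nonneg (g''' s), hbound s, hM]
  have hb1 : ∀ s : ℝ, g''' s ≤ M * g'' s := fun s => (le_abs_self _).trans (hbound s)
  have hb2 : ∀ s : ℝ, -(M * g'' s) ≤ g''' s := fun s => neg_le_of_neg_le
    (by calc -(g''' s) ≤ |g''' s| := neg_le_abs _
          _ ≤ M * g'' s := hbound s)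
  have hMne : M ≠ 0 := ne_of_gt hM
  -- exponential derivative helpers
  have hexpP : ∀ s : ℝ, HasDerivAt (fun u => Real.exp (M * u)) (M * Real.exp (M * s)) s := by
    intro s
    have := (((hasDerivAt_id s).const_mul M)).exp
    simpa [mul_comm] using this
  have hexpN : ∀ s : ℝ, HasDerivAt (fun u => Real.exp (-(M * u))) (-M * Real.exp (-(M * s))) s := by
    intro s
    have := (((hasDerivAt_id s).const_mul M).neg).exp
    simpa [mul_comm] using this
  -- Step 1 upper: g'' s ≤ g'' 0 * exp (M s) for s ≥ 0
  have h2up : ∀ s : ℝ, 0 ≤ s → g'' s ≤ g'' 0 * Real.exp (M * s) := by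
    have key := mono_from_deriv_aux
      (fun u => -(g'' u * Real.exp (-(M * u))))
      (fun u => -(g''' u * Real.exp (-(M * u)) + g'' u * (-M * Real.exp (-(M * u)))))
      (fun u => ((hd3 u).mul (hexpN u)).neg)
      (by intro u _
          have h := hb1 u
          have he : 0 < Real.exp (-(M * u)) := Real.exp_pos _
          nlinarith)
    intro s hs
    have h := key s hs
    simp only [mul_zero, neg_zero, Real.exp_zero, mul_one, neg_le_neg_iff] at h
    have he : (0:ℝ) < Real.exp (M * s) := Real.exp_pos _
    have heq : Real.exp (M * s) * Real.exp (-(M * s)) = 1 := by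
      rw [← Real.exp_add]; simp
    have h4 := mul_le_mul_of_nonneg_right h he.le
    have h5 : g'' s * Real.exp (-(M * s)) * Real.exp (M * s) = g'' s := by
      rw [mul_assoc, mul_comm (Real.exp (-(M * s))), heq, mul_one]
    linarith
  -- Step 1 lower: g'' 0 * exp (-(M s)) ≤ g'' s for s ≥ 0
  have h2lo : ∀ s : ℝ, 0 ≤ s → g'' 0 * Real.exp (-(M * s)) ≤ g'' s := by
    have key := mono_from_deriv_aux
      (fun u => g'' u * Real.exp (M * u))
      (fun u => g''' u * Real.exp (M * u) + g'' u * (M * Real.exp (M * u)))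
      (fun u => (hd3 u).mul (hexpP u))
      (by intro u _
          have h := hb2 u
          have he : 0 < Real.exp (M * u) := Real.exp_pos _
          nlinarith)
    intro s hs
    have h := key s hs
    simp only [mul_zero, Real.exp_zero, mul_one] at h
    have he : (0:ℝ) < Real.exp (-(M * s)) := Real.exp_pos _
    have heq : Real.exp (M * s) * Real.exp (-(M * s)) = 1 := by
      rw [← Real.exp_add]; simp
    have h4 := mul_le_mul_of_nonneg_right h he.le
    have h5 : g'' s * Real.exp (M * s) * Real.exp (-(M * s)) = g'' s := by
      rw [mul_assoc, heq, mul_one]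
    linarith
  -- Step 2 upper: g' s ≤ g' 0 + (g'' 0 / M) * (exp (M s) - 1)
  have h1up : ∀ s : ℝ, 0 ≤ s → g' s ≤ g' 0 + g'' 0 / M * (Real.exp (M * s) - 1) := by
    have key := mono_from_deriv_aux
      (fun u => g'' 0 / M * Real.exp (M * u) - g' u)
      (fun u => g'' 0 / M * (M * Real.exp (M * u)) - g'' u)
      (fun u => ((hexpP u).const_mul (g'' 0 / M)).sub (hd2 u))
      (by intro u hu
          have h := h2up u hu
          have heq : g'' 0 / M * (M * Real.exp (M * u)) = g'' 0 * Real.exp (M * u) := by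
            field_simp
          rw [heq]; linarith)
    intro s hs
    have h := key s hs
    simp only [mul_zero, Real.exp_zero, mul_one] at h
    linarith
  -- Step 2 lower: g' 0 + (g'' 0 / M) * (1 - exp (-(M s))) ≤ g' s
  have h1lo : ∀ s : ℝ, 0 ≤ s → g' 0 + g'' 0 / M * (1 - Real.exp (-(M * s))) ≤ g' s := by
    have key := mono_from_deriv_aux
      (fun u => g' u + g'' 0 / M * Real.exp (-(M * u)))
      (fun u => g'' u + g'' 0 / M * (-M * Real.exp (-(M * u))))
      (fun u => (hd2 u).add ((hexpN u).const_mul (g'' 0 / M)))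
      (by intro u hu
          have h := h2lo u hu
          have heq : g'' 0 / M * (-M * Real.exp (-(M * u))) = -(g'' 0 * Real.exp (-(M * u))) := by
            field_simp
          rw [heq]; linarith)
    intro s hs
    have h := key s hs
    simp only [mul_zero, neg_zero, Real.exp_zero, mul_one] at h
    linarith
  -- Step 3
  intro t ht
  constructor
  · -- lower bound
    have key := mono_from_deriv_aux
      (fun u => g u - g' 0 * u - g'' 0 / M ^ 2 * (Real.exp (-(M * u)) + M * u))
      (fun u => g' u - g' 0 - g'' 0 / M ^ 2 * (-M * Real.exp (-(M * u)) + M))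
      (by intro u
          have h1 : HasDerivAt (fun u : ℝ => g' 0 * u) (g' 0) u := by
            simpa using (hasDerivAt_id u).const_mul (g' 0)
          have h2 : HasDerivAt (fun u : ℝ => Real.exp (-(M * u)) + M * u)
              (-M * Real.exp (-(M * u)) + M) u := by
            have := (hexpN u).add ((hasDerivAt_id u).const_mul M)
            exact this.congr_deriv (by ring)
          exact ((hd1 u).sub h1).sub (h2.const_mul _))
      (by intro u hu
          have h := h1lo u hu
          have heq : g'' 0 / M ^ 2 * (-M * Real.exp (-(M * u)) + M)
              = g'' 0 / M * (1 - Real.exp (-(M * u))) := by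
            field_simp; ring
          rw [heq]; linarith)
    have h := key t ht
    simp only [mul_zero, neg_zero, Real.exp_zero, add_zero] at h
    have hexpand := mul_sub (g'' 0 / M ^ 2) (Real.exp (-(M * t)) + M * t) 1
    nlinarith [h]
  · -- upper bound: first the standard bound with exp(Mt) - Mt - 1
    have key := mono_from_deriv_aux
      (fun u => g'' 0 / M ^ 2 * (Real.exp (M * u) - M * u) - (g u - g' 0 * u))
      (fun u => g'' 0 / M ^ 2 * (M * Real.exp (M * u) - M) - (g' u - g' 0))
      (by intro u
          have h1 : HasDerivAt (fun u : ℝ => g' 0 * u) (g' 0) u := by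
            simpa using (hasDerivAt_id u).const_mul (g' 0)
          have h2 : HasDerivAt (fun u : ℝ => Real.exp (M * u) - M * u)
              (M * Real.exp (M * u) - M) u := by
            have := (hexpP u).sub ((hasDerivAt_id u).const_mul M)
            exact this.congr_deriv (by ring)
          exact (h2.const_mul _).sub ((hd1 u).sub h1))
      (by intro u hu
          have h := h1up u hu
          have heq : g'' 0 / M ^ 2 * (M * Real.exp (M * u) - M)
              = g'' 0 / M * (Real.exp (M * u) - 1) := by
            field_simp
          rw [heq]; linarith)
    have h := key t ht
    simp only [mul_zero, Real.exp_zero, sub_zero] at h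
    have hextra : 0 ≤ g'' 0 / M ^ 2 * (2 * (M * t)) := by
      have h0 : (0:ℝ) ≤ g'' 0 / M ^ 2 := div_nonneg (hg2 0) (by positivity)
      have hMt : 0 ≤ M * t := mul_nonneg hM.le ht
      positivity
    nlinarith [h, hextra]
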